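/- In a solvable SRI instance with preference lists of length at most 3 (all (1,1)-pairs and (3,3)-pairs removed, i.e., no edge is ranked first by both endpoints and no edge is ranked last by both endpoints with both endpoints having 3 neighbours), for every stable matching M and every edge uv in an egalitarian stable matching M_egal, rank(u,M(u)) + rank(v,M(v)) ≤ (4/3) · (rank(u,v) + rank(v,u)). Consequently, c(M) ≤ (4/3) · c(M_egal), where c(M) = Σ_{a matched in M} rank(a, M(a)). -/

import Mathlib

/-- An instance of the Stable Roommates problem with Incomplete (strict) lists:
a graph together with a rank function, where `rank u v` is one plus the number
of neighbours of `u` that `u` strictly prefers to `v`, and ranks of distinct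
neighbours are distinct (strict preferences). -/
structure SRI (V : Type*) [Fintype V] where
  G : SimpleGraph V
  rank : V → V → ℕ
  rank_eq : ∀ u v, G.Adj u v →
    rank u v = 1 + Set.ncard {w | G.Adj u w ∧ rank u w < rank u v}
  rank_inj : ∀ u v w, G.Adj u v → G.Adj u w → rank u v = rank u w → v = w

variable {V : Type*} [Fintype V]

/-- A matching: a symmetric partial pairing along edges of the graph. -/
structure SRI.Matching (I : SRI V) where
  M : V → Option V
  symm : ∀ u v, M u = some v → M v = some u
  adj : ∀ u v, M u = some v → I.G.Adj u v

/-- Edge `uv` blocks `N`. -/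
def SRI.Blocks (I : SRI V) (N : I.Matching) (u v : V) : Prop :=
  I.G.Adj u v ∧ N.M u ≠ some v ∧
  (N.M u = none ∨ ∃ w, N.M u = some w ∧ I.rank u v < I.rank u w) ∧
  (N.M v = none ∨ ∃ w, N.M v = some w ∧ I.rank v u < I.rank v w)

def SRI.Stable (I : SRI V) (N : I.Matching) : Prop := ∀ u v, ¬ I.Blocks N u v

/-- Cost of a matching: the sum of `rank a (M a)` over matched agents `a`. -/
def SRI.cost (I : SRI V) (N : I.Matching) : ℕ :=
  ∑ v : V, (N.M v).elim 0 (I.rank v)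

/-- Every preference list has length at most `d`. -/
def SRI.MaxDeg (I : SRI V) (d : ℕ) : Prop := ∀ v, Set.ncard {w | I.G.Adj v w} ≤ d

/-- An egalitarian stable matching minimises cost among stable matchings. -/
def SRI.Egalitarian (I : SRI V) (N : I.Matching) : Prop :=
  I.Stable N ∧ ∀ N' : I.Matching, I.Stable N' → I.cost N ≤ I.cost N'

section
variable {V : Type*} [Fintype V]

lemma SRI.rank_pos (I : SRI V) {u v : V} (h : I.G.Adj u v) : 1 ≤ I.rank u v := by
  rw [I.rank_eq u v h]; omega

lemma SRI.rank_le3 (I : SRI V) (h3 : I.MaxDeg 3) {u v : V} (h : I.G.Adj u v) :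
    I.rank u v ≤ 3 := by
  have hsub : {w | I.G.Adj u w ∧ I.rank u w < I.rank u v} ⊆ {w | I.G.Adj u w} \ {v} := by
    rintro w ⟨hw, hr⟩
    refine ⟨hw, ?_⟩
    rintro rfl
    exact lt_irrefl _ hr
  have hle : Set.ncard ({w | I.G.Adj u w ∧ I.rank u w < I.rank u v}) ≤
      Set.ncard ({w | I.G.Adj u w} \ {v}) :=
    Set.ncard_le_ncard hsub (Set.toFinite _).diff
  have hv : v ∈ {w | I.G.Adj u w} := h
  have hd : Set.ncard ({w | I.G.Adj u w} \ {v}) = Set.ncard {w | I.G.Adj u w} - 1 :=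
    Set.ncard_diff_singleton_of_mem hv
  have := h3 u
  rw [I.rank_eq u v h]
  omega

lemma SRI.block_step (I : SRI V) (Mb : I.Matching) (hS : I.Stable Mb) {x y : V}
    (hadj : I.G.Adj x y) (hx : Mb.M x ≠ some y)
    (hside : Mb.M x = none ∨ ∃ w, Mb.M x = some w ∧ I.rank x y < I.rank x w) :
    ∃ z, Mb.M y = some z ∧ z ≠ x ∧ I.rank y z < I.rank y x := by
  have hnb := hS x y
  rw [SRI.Blocks] at hnb
  push_neg at hnb
  have h2 := hnb hadj hx hside
  obtain ⟨hne, hall⟩ := h2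
  obtain ⟨z, hz⟩ := Option.ne_none_iff_exists'.mp hne
  have hle : I.rank y z ≤ I.rank y x := hall z hz
  have hzx : z ≠ x := by
    rintro rfl
    exact hx (Mb.symm y z hz)
  refine ⟨z, hz, hzx, lt_of_le_of_ne hle ?_⟩
  intro he
  exact hzx (I.rank_inj y z x (Mb.adj y z hz) hadj.symm he)

end
section
variable {V : Type*} [Fintype V]

/-- Alternating choice of matchings. -/
def SRI.alt (I : SRI V) (M M' : I.Matching) (n : ℕ) : I.Matching :=
  if n % 2 = 0 then M else M'

lemma SRI.alt_congr (I : SRI V) (M M' : I.Matching) {a b : ℕ} (h : a % 2 = b % 2) :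
    I.alt M M' a = I.alt M M' b := by
  unfold SRI.alt
  rw [h]

lemma SRI.alt_add_two (I : SRI V) (M M' : I.Matching) (n : ℕ) :
    I.alt M M' (n + 2) = I.alt M M' n :=
  I.alt_congr M M' (by omega)

lemma SRI.alt_stable (I : SRI V) {M M' : I.Matching} (hM : I.Stable M) (hM' : I.Stable M')
    (n : ℕ) : I.Stable (I.alt M M' n) := by
  unfold SRI.alt
  split_ifs <;> assumption

/-- The alternating path sequence. -/
def SRI.seq (I : SRI V) (M M' : I.Matching) (u0 : V) : ℕ → V
  | 0 => u0
  | (n+1) => ((I.alt M M' n).M (I.seq M M' u0 n)).getD u0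

lemma SRI.seqQ (I : SRI V) (M M' : I.Matching) (hM : I.Stable M) (hM' : I.Stable M')
    (u0 u1 : V) (hu1 : M.M u0 = some u1) (hnone : M'.M u0 = none) :
    ∀ n, (I.alt M M' n).M (I.seq M M' u0 n) = some (I.seq M M' u0 (n+1)) ∧
      (I.alt M M' (n+1)).M (I.seq M M' u0 (n+1)) = some (I.seq M M' u0 (n+2)) ∧
      I.rank (I.seq M M' u0 (n+1)) (I.seq M M' u0 (n+2)) <
        I.rank (I.seq M M' u0 (n+1)) (I.seq M M' u0 n) := by
  set f := I.seq M M' u0 with hf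
  have halt0 : I.alt M M' 0 = M := by unfold SRI.alt; simp
  have halt1 : I.alt M M' 1 = M' := by unfold SRI.alt; simp
  intro n
  induction n with
  | zero =>
      have h0 : f 0 = u0 := rfl
      have h1 : f 1 = u1 := by
        show ((I.alt M M' 0).M (f 0)).getD u0 = u1
        rw [halt0, h0, hu1]; rfl
      have hstep := I.block_step M' hM' (M.adj u0 u1 hu1)
        (by rw [hnone]; exact (Option.some_ne_none _).symm) (Or.inl hnone)
      obtain ⟨z, hz, hzx, hzr⟩ := hstep
      have h2 : f 2 = z := by
        show ((I.alt M M' 1).M (f 1)).getD u0 = z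
        rw [halt1, h1, hz]; rfl
      refine ⟨?_, ?_, ?_⟩
      · rw [halt0, h0, h1, hu1]
      · rw [halt1, h1, h2, hz]
      · rw [h0, h1, h2]; exact hzr
  | succ n ih =>
      obtain ⟨ih1, ih2, ih3⟩ := ih
      have hsym : (I.alt M M' n).M (f (n+1)) = some (f n) :=
        (I.alt M M' n).symm _ _ ih1
      have hne02 : f n ≠ f (n+2) := by
        intro h
        rw [h] at ih3
        exact lt_irrefl _ ih3
      have hstep := I.block_step (I.alt M M' n) (I.alt_stable hM hM' n)
        ((I.alt M M' (n+1)).adj _ _ ih2)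
        (by rw [hsym]; intro h; exact hne02 (Option.some.inj h))
        (Or.inr ⟨f n, hsym, ih3⟩)
      obtain ⟨z, hz, hzx, hzr⟩ := hstep
      have h3 : f (n+3) = z := by
        show ((I.alt M M' (n+2)).M (f (n+2))).getD u0 = z
        rw [I.alt_add_two, hz]; rfl
      refine ⟨ih2, ?_, ?_⟩
      · rw [I.alt_add_two, h3, hz]
      · rw [h3]; exact hzr

end
section
variable {V : Type*} [Fintype V]

lemma SRI.matched_trans (I : SRI V) (M M' : I.Matching) (hM : I.Stable M)
    (hM' : I.Stable M') {u0 : V} (hu : M.M u0 ≠ none) : M'.M u0 ≠ none := by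
  obtain ⟨u1, hu1⟩ := Option.ne_none_iff_exists'.mp hu
  intro hnone
  set f := I.seq M M' u0 with hf
  have Q := I.seqQ M M' hM hM' u0 u1 hu1 hnone
  simp only [← hf] at Q
  have hf0 : f 0 = u0 := rfl
  -- every f (k+1) is matched in M'
  have hmatched : ∀ k, M'.M (f (k+1)) ≠ none := by
    intro k
    rcases Nat.mod_two_eq_zero_or_one k with hk | hk
    · have he : I.alt M M' (k+1) = M' := by
        unfold SRI.alt
        rw [if_neg (by omega : ¬ (k+1) % 2 = 0)]
      have h := (Q k).2.1
      rw [he] at h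
      rw [h]; exact Option.some_ne_none _
    · have he : I.alt M M' k = M' := by
        unfold SRI.alt
        rw [if_neg (by omega : ¬ k % 2 = 0)]
      have h := (I.alt M M' k).symm _ _ (Q k).1
      rw [he] at h
      rw [h]; exact Option.some_ne_none _
  have L0 : ∀ k, f 0 ≠ f (k+1) := by
    intro k h
    exact hmatched k (by rw [← h, hf0, hnone])
  -- same parity
  have Lsame : ∀ j, ∀ k, j % 2 = k % 2 → j < k → f j ≠ f k := by
    intro j
    induction j with
    | zero =>
        intro k hp hlt
        obtain ⟨k', rfl⟩ := Nat.exists_eq_add_of_lt hlt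
        simpa using L0 (0 + k')
    | succ j ih =>
        intro k hp hlt heq
        obtain ⟨k', rfl⟩ : ∃ k', k = k' + 1 := ⟨k - 1, by omega⟩
        have hs1 : (I.alt M M' j).M (f (j+1)) = some (f j) :=
          (I.alt M M' j).symm _ _ (Q j).1
        have hs2 : (I.alt M M' k').M (f (k'+1)) = some (f k') :=
          (I.alt M M' k').symm _ _ (Q k').1
        have halt : I.alt M M' j = I.alt M M' k' := I.alt_congr M M' (by omega)
        rw [← heq, ← halt, hs1] at hs2
        exact ih k' (by omega) (by omega) (Option.some.inj hs2)
  -- different parity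
  have Ldiff : ∀ j k, j % 2 ≠ k % 2 → f (j+1) ≠ f (k+1) := by
    intro j k hp heq
    have hj1 : (I.alt M M' j).M (f (j+1)) = some (f j) :=
      (I.alt M M' j).symm _ _ (Q j).1
    have hj2 : (I.alt M M' (j+1)).M (f (j+1)) = some (f (j+2)) := (Q j).2.1
    have hk1 : (I.alt M M' k).M (f (k+1)) = some (f k) :=
      (I.alt M M' k).symm _ _ (Q k).1
    have hk2 : (I.alt M M' (k+1)).M (f (k+1)) = some (f (k+2)) := (Q k).2.1
    have e1 : I.alt M M' j = I.alt M M' (k+1) := I.alt_congr M M' (by omega)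
    have e2 : I.alt M M' (j+1) = I.alt M M' k := I.alt_congr M M' (by omega)
    rw [← heq, ← e1, hj1] at hk2
    rw [← heq, ← e2, hj2] at hk1
    have hA : f j = f (k+2) := Option.some.inj hk2
    have hB : f (j+2) = f k := Option.some.inj hk1
    have r1 := (Q j).2.2
    have r2 := (Q k).2.2
    rw [hA, hB, heq] at r1
    exact lt_asymm r1 r2
  have key : ∀ a b, a < b → f a = f b → False := by
    intro a b hlt heq
    by_cases hp : a % 2 = b % 2
    · exact Lsame a b hp hlt heq
    · cases a with
      | zero =>
          cases b with
          | zero => omega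
          | succ b' => exact L0 b' heq
      | succ a' =>
          cases b with
          | zero => omega
          | succ b' => exact Ldiff a' b' (by omega) heq
  have hinj : Function.Injective f := by
    intro a b heq
    by_contra hne
    rcases lt_trichotomy a b with h | h | h
    · exact key a b h heq
    · exact hne h
    · exact key b a h heq.symm
  obtain ⟨a, b, hab, heq⟩ := Finite.exists_ne_map_eq_of_infinite f
  exact hab (hinj heq)

end
section
variable {V : Type*} [Fintype V]

lemma SRI.edgewise (I : SRI V) (h3 : I.MaxDeg 3)
    (h11 : ∀ u v, I.G.Adj u v → ¬ (I.rank u v = 1 ∧ I.rank v u = 1))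
    (N Ne : I.Matching) (hN : I.Stable N) (hNeS : I.Stable Ne) :
    ∀ u v, Ne.M u = some v →
      ∃ a b, N.M u = some a ∧ N.M v = some b ∧
        3 * (I.rank u a + I.rank v b) ≤ 4 * (I.rank u v + I.rank v u) := by
  intro u v huv
  have hvu : Ne.M v = some u := Ne.symm u v huv
  have hadj : I.G.Adj u v := Ne.adj u v huv
  have hmu : N.M u ≠ none := I.matched_trans Ne N hNeS hN (by rw [huv]; exact Option.some_ne_none _)
  have hmv : N.M v ≠ none := I.matched_trans Ne N hNeS hN (by rw [hvu]; exact Option.some_ne_none _)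
  obtain ⟨a, ha⟩ := Option.ne_none_iff_exists'.mp hmu
  obtain ⟨b, hb⟩ := Option.ne_none_iff_exists'.mp hmv
  refine ⟨a, b, ha, hb, ?_⟩
  have hru1 : 1 ≤ I.rank u v := I.rank_pos hadj
  have hrv1 : 1 ≤ I.rank v u := I.rank_pos hadj.symm
  have hru3 : I.rank u v ≤ 3 := I.rank_le3 h3 hadj
  have hrv3 : I.rank v u ≤ 3 := I.rank_le3 h3 hadj.symm
  have hadja : I.G.Adj u a := N.adj u a ha
  have hadjb : I.G.Adj v b := N.adj v b hb
  have hsu1 : 1 ≤ I.rank u a := I.rank_pos hadja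
  have hsv1 : 1 ≤ I.rank v b := I.rank_pos hadjb
  have hsu3 : I.rank u a ≤ 3 := I.rank_le3 h3 hadja
  have hsv3 : I.rank v b ≤ 3 := I.rank_le3 h3 hadjb
  have h11' := h11 u v hadj
  by_cases hav : a = v
  · subst hav
    have : N.M a = some u := N.symm u a ha
    rw [this] at hb
    have : b = u := (Option.some.inj hb).symm
    subst this
    omega
  · have hbu : b ≠ u := by
      rintro rfl
      exact hav (Option.some.inj ((N.symm v b hb).symm.trans ha).symm)
    have hnb := hN u v
    rw [SRI.Blocks] at hnb
    push_neg at hnb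
    have hne : N.M u ≠ some v := by
      rw [ha]; intro h; exact hav (Option.some.inj h)
    have hkey : I.rank u a < I.rank u v ∨ I.rank v b < I.rank v u := by
      by_contra hcon
      push_neg at hcon
      obtain ⟨hc1, hc2⟩ := hcon
      have hsune : I.rank u v ≠ I.rank u a := by
        intro h
        exact hav (I.rank_inj u v a hadj hadja h).symm
      have hsvne : I.rank v u ≠ I.rank v b := by
        intro h
        exact hbu (I.rank_inj v b u hadjb hadj.symm h.symm)
      have h1 := hnb hadj hne (Or.inr ⟨a, ha, by omega⟩)
      have := h1.2 b hb
      omega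
    omega

end


/-- 4/3-approximation for 3-SRI without (1,1)- and (3,3)-pairs: edgewise bound
and the consequent global bound `c(M) ≤ (4/3) c(M_egal)`. -/
theorem stmt4 (I : SRI V) (h3 : I.MaxDeg 3)
    (h11 : ∀ u v, I.G.Adj u v → ¬ (I.rank u v = 1 ∧ I.rank v u = 1))
    (h33 : ∀ u v, I.G.Adj u v → ¬ (I.rank u v = 3 ∧ I.rank v u = 3))
    (N Ne : I.Matching) (hN : I.Stable N) (hNe : I.Egalitarian Ne) :
    (∀ u v, Ne.M u = some v →
      ∃ a b, N.M u = some a ∧ N.M v = some b ∧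
        3 * (I.rank u a + I.rank v b) ≤ 4 * (I.rank u v + I.rank v u)) ∧
    3 * I.cost N ≤ 4 * I.cost Ne := by
  have key := I.edgewise h3 h11 N Ne hN hNe.1
  refine ⟨key, ?_⟩
  classical
  set tN : V → ℕ := fun v => (N.M v).elim 0 (I.rank v) with htN
  set tNe : V → ℕ := fun v => (Ne.M v).elim 0 (I.rank v) with htNe
  set σ : V → V := fun v => (Ne.M v).getD v with hσdef
  have hσ : Function.Involutive σ := by
    intro v
    rcases h : Ne.M v with _ | w
    · simp [hσdef, h]
    · have h2 : Ne.M w = some v := Ne.symm v w h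
      simp [hσdef, h, h2]
  have hpoint : ∀ v, 3 * tN v + 3 * tN (σ v) ≤ 4 * tNe v + 4 * tNe (σ v) := by
    intro v
    rcases h : Ne.M v with _ | w
    · have hσv : σ v = v := by simp [hσdef, h]
      have hNv : N.M v = none := by
        by_contra hne
        exact I.matched_trans N Ne hN hNe.1 hne h
      simp [hσv, htN, htNe, h, hNv]
    · have hσv : σ v = w := by simp [hσdef, h]
      have hwv : Ne.M w = some v := Ne.symm v w h
      obtain ⟨a, b, hA, hB, hle⟩ := key v w h
      have e1 : tN v = I.rank v a := by simp [htN, hA]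
      have e2 : tN w = I.rank w b := by simp [htN, hB]
      have e3 : tNe v = I.rank v w := by simp [htNe, h]
      have e4 : tNe w = I.rank w v := by simp [htNe, hwv]
      rw [hσv, e1, e2, e3, e4]
      omega
  have hsumN : ∑ x : V, tN (σ x) = ∑ x : V, tN x := Equiv.sum_comp (hσ.toPerm σ) tN
  have hsumNe : ∑ x : V, tNe (σ x) = ∑ x : V, tNe x := Equiv.sum_comp (hσ.toPerm σ) tNe
  have hbig : ∑ x : V, (3 * tN x + 3 * tN (σ x)) ≤ ∑ x : V, (4 * tNe x + 4 * tNe (σ x)) :=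
    Finset.sum_le_sum fun x _ => hpoint x
  rw [Finset.sum_add_distrib, Finset.sum_add_distrib, ← Finset.mul_sum, ← Finset.mul_sum,
    ← Finset.mul_sum, ← Finset.mul_sum, hsumN, hsumNe] at hbig
  have hcN : I.cost N = ∑ x : V, tN x := rfl
  have hcNe : I.cost Ne = ∑ x : V, tNe x := rfl
  omega
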